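/- Eve's success probability in guessing the key, given the ensemble of Eve's states $\{{\cal E}_E(|y\rangle\langle y|)\}_{y\in\mathbb{F}_2^l}$ with uniform prior from a Pauli channel with phase error probability $P_{ph}$, satisfies $P_{succ} \leq \left(\sqrt{P_{ph}}\sqrt{1-2^{-l}} + \sqrt{1-P_{ph}}\sqrt{2^{-l}}\right)^2$. -/

import Mathlib

open Matrix
open scoped ComplexOrder

open Classical in
/-- The positive-semidefinite square root of a matrix (junk value `0` off the PSD cone). -/
noncomputable def msqrt {ι : Type*} [Fintype ι] [DecidableEq ι]
    (A : Matrix ι ι ℂ) : Matrix ι ι ℂ :=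
  if h : A.PosSemidef then
    (h.1.eigenvectorUnitary : Matrix ι ι ℂ) *
      diagonal ((↑) ∘ (√·) ∘ h.1.eigenvalues) *
      (star h.1.eigenvectorUnitary : Matrix ι ι ℂ)
  else 0

/-- The Uhlmann fidelity `F(ρ, ρ') = Tr √(√ρ' ρ √ρ')`. -/
noncomputable def fidelity {ι : Type*} [Fintype ι] [DecidableEq ι]
    (ρ ρ' : Matrix ι ι ℂ) : ℝ :=
  ((msqrt (msqrt ρ' * ρ * msqrt ρ')).trace).re

/-- The marginal `P(x) = ∑ z P(x, z)`. -/
noncomputable def margP (l : ℕ)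
    (P : (Fin l → ZMod 2) × (Fin l → ZMod 2) → ℝ) (x : Fin l → ZMod 2) : ℝ :=
  ∑ z, P (x, z)

/-- Eve's vector `|P,y,x⟩ = ∑ z (-1)^{z·y} √(P(z|x)) |(x,z)⟩`. -/
noncomputable def eveKet (l : ℕ)
    (P : (Fin l → ZMod 2) × (Fin l → ZMod 2) → ℝ)
    (y x : Fin l → ZMod 2) :
    ((Fin l → ZMod 2) × (Fin l → ZMod 2)) → ℂ :=
  fun w =>
    if w.1 = x then
      (-1 : ℂ) ^ ((w.2 ⬝ᵥ y : ZMod 2)).val *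
        (Real.sqrt (P (x, w.2) / margP l P x) : ℝ)
    else 0

/-- Eve's state `ρ_y = ∑ x P(x) |P,y,x⟩⟨P,y,x|` after Alice sends `|y⟩` in the `+`
basis through a Pauli channel with error distribution `P`. -/
noncomputable def eveState (l : ℕ)
    (P : (Fin l → ZMod 2) × (Fin l → ZMod 2) → ℝ)
    (y : Fin l → ZMod 2) :
    Matrix ((Fin l → ZMod 2) × (Fin l → ZMod 2))
      ((Fin l → ZMod 2) × (Fin l → ZMod 2)) ℂ :=
  ∑ x, (margP l P x : ℂ) • Matrix.vecMulVec (eveKet l P y x) (star (eveKet l P y x))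
section Helpers
set_option linter.unusedSectionVars false
variable {ι : Type*} [Fintype ι] [DecidableEq ι]

open scoped MatrixOrder in
noncomputable def Matrix.PosSemidef.sqrt {M : Matrix ι ι ℂ} (_hM : M.PosSemidef) :
    Matrix ι ι ℂ := CFC.sqrt M

open scoped MatrixOrder in
lemma Matrix.PosSemidef.sqrt_mul_self {M : Matrix ι ι ℂ} (hM : M.PosSemidef) :
    hM.sqrt * hM.sqrt = M := CFC.sqrt_mul_sqrt_self M hM.nonneg

open scoped MatrixOrder in
lemma Matrix.PosSemidef.posSemidef_sqrt {M : Matrix ι ι ℂ} (hM : M.PosSemidef) :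
    hM.sqrt.PosSemidef := (CFC.sqrt_nonneg M).posSemidef

noncomputable def en (v : ι → ℂ) : ℝ := ‖WithLp.toLp 2 v‖

lemma en_nonneg (v : ι → ℂ) : 0 ≤ en v := norm_nonneg _

lemma en_sq (v : ι → ℂ) : en v ^ 2 = ∑ i, ‖v i‖ ^ 2 := by
  rw [en, EuclideanSpace.norm_eq, Real.sq_sqrt (by positivity)]

lemma en_add (v w : ι → ℂ) : en (v + w) ≤ en v + en w :=
  norm_add_le (WithLp.toLp 2 v) (WithLp.toLp 2 w)

lemma en_smul (c : ℂ) (v : ι → ℂ) : en (c • v) = ‖c‖ * en v :=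
  norm_smul c (WithLp.toLp 2 v)

lemma en_sum_le {κ : Type*} (s : Finset κ) (f : κ → ι → ℂ) :
    en (∑ z ∈ s, f z) ≤ ∑ z ∈ s, en (f z) :=
  by unfold en; rw [WithLp.toLp_sum]; exact norm_sum_le _ _

lemma trace_vecMulVec_mul (v w : ι → ℂ) (M : Matrix ι ι ℂ) :
    (vecMulVec v w * M).trace = w ⬝ᵥ (M *ᵥ v) := by
  simp only [Matrix.trace, Matrix.diag_apply, Matrix.mul_apply, vecMulVec_apply,
    dotProduct, mulVec, Finset.mul_sum]
  rw [Finset.sum_comm]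
  exact Finset.sum_congr rfl fun j _ => Finset.sum_congr rfl fun i _ => by ring

lemma dot_star_self (w : ι → ℂ) : (star w ⬝ᵥ w).re = ∑ i, ‖w i‖ ^ 2 := by
  rw [dotProduct, Complex.re_sum]
  refine Finset.sum_congr rfl fun i _ => ?_
  simp [Complex.conj_mul', ← Complex.ofReal_pow]

lemma quad_eq_en_sq {M : Matrix ι ι ℂ} (hM : M.PosSemidef) (v : ι → ℂ) :
    (star v ⬝ᵥ (M *ᵥ v)).re = en (hM.sqrt *ᵥ v) ^ 2 := by
  rw [en_sq, ← dot_star_self]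
  conv_lhs => rw [← hM.sqrt_mul_self, ← mulVec_mulVec, dotProduct_mulVec]
  congr 1
  rw [star_mulVec, hM.posSemidef_sqrt.1]

/-- basis vector -/
noncomputable def bv (i : ι) : ι → ℂ := fun w => if w = i then 1 else 0

lemma quad_bv {M : Matrix ι ι ℂ} (hM : M.PosSemidef) (i : ι) :
    en (hM.sqrt *ᵥ bv i) ^ 2 = (M i i).re := by
  rw [← quad_eq_en_sq hM]
  congr 1
  simp [bv, dotProduct, mulVec, apply_ite]

lemma mulVec_sum' {κ : Type*} (s : Finset κ) (A : Matrix ι ι ℂ) (f : κ → ι → ℂ) :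
    A *ᵥ (∑ z ∈ s, f z) = ∑ z ∈ s, A *ᵥ f z := by
  simp only [← Matrix.mulVecLin_apply]
  exact map_sum _ _ _

end Helpers

set_option maxHeartbeats 2000000 in
/-- Eve's optimal success probability in guessing the final key from the ensemble of
states `{ρ_y}` (with uniform prior) of a Pauli channel with phase error probability
`P_ph = 1 - ∑ x P(x,0)` is bounded:  for every POVM `{M_y}`,
`2^{-l} ∑_y Tr(ρ_y M_y) ≤ (√P_ph √(1-2^{-l}) + √(1-P_ph) √(2^{-l}))²`. -/
theorem eve_success_prob_le (l : ℕ)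
    (P : (Fin l → ZMod 2) × (Fin l → ZMod 2) → ℝ)
    (hP0 : ∀ w, 0 ≤ P w) (hP1 : ∑ w, P w = 1)
    (M : (Fin l → ZMod 2) →
      Matrix ((Fin l → ZMod 2) × (Fin l → ZMod 2))
        ((Fin l → ZMod 2) × (Fin l → ZMod 2)) ℂ)
    (hMpos : ∀ y, (M y).PosSemidef) (hMsum : ∑ y, M y = 1) :
    ((2 : ℝ) ^ l)⁻¹ * ∑ y, ((eveState l P y * M y).trace).re ≤
      (Real.sqrt (1 - ∑ x, P (x, 0)) * Real.sqrt (1 - ((2 : ℝ) ^ l)⁻¹) +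
        Real.sqrt (∑ x, P (x, 0)) * Real.sqrt (((2 : ℝ) ^ l)⁻¹)) ^ 2 := by
  classical
  set N : ℝ := (2 : ℝ) ^ l with hN
  set ε : ℝ := N⁻¹ with hε
  have hNpos : 0 < N := by positivity
  have hN1 : 1 ≤ N := one_le_pow₀ (by norm_num)
  have hε0 : 0 ≤ ε := by positivity
  have hε1 : ε ≤ 1 := by
    rw [hε, inv_le_one_iff₀]; right; exact hN1
  have hcard : (Fintype.card (Fin l → ZMod 2) : ℝ) = N := by
    rw [show Fintype.card (Fin l → ZMod 2) = 2 ^ l by simp [Fintype.card_fun]]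
    push_cast [hN]; rfl
  have hmarg0 : ∀ x, 0 ≤ margP l P x := fun x => Finset.sum_nonneg fun _ _ => hP0 _
  have hP0le : ∀ x : Fin l → ZMod 2, P (x, 0) ≤ margP l P x := fun x =>
    Finset.single_le_sum (f := fun z => P (x, z)) (fun _ _ => hP0 _) (Finset.mem_univ 0)
  set q : ℝ := ∑ x : Fin l → ZMod 2, P (x, 0) with hq
  have hq0 : 0 ≤ q := Finset.sum_nonneg fun _ _ => hP0 _
  have hmargsum : ∑ x : Fin l → ZMod 2, margP l P x = 1 := by
    rw [← hP1, Fintype.sum_prod_type]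
    rfl
  have hq1 : q ≤ 1 := by
    rw [← hmargsum]
    exact Finset.sum_le_sum fun x _ => hP0le x
  -- quadratic forms in each basis vector sum to `1` over the POVM
  have hbvsum : ∀ i : (Fin l → ZMod 2) × (Fin l → ZMod 2),
      ∑ y, en ((hMpos y).sqrt *ᵥ bv i) ^ 2 = 1 := by
    intro i
    have : ∀ y, en ((hMpos y).sqrt *ᵥ bv i) ^ 2 = ((M y) i i).re :=
      fun y => quad_bv (hMpos y) i
    rw [Finset.sum_congr rfl fun y _ => this y, ← Complex.re_sum]
    rw [show ∑ y, (M y) i i = (∑ y, M y) i i from (Matrix.sum_apply i i _ _).symm, hMsum]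
    simp [Matrix.one_apply_eq]
  -- main per-x bound
  have key : ∀ x : Fin l → ZMod 2, 0 < margP l P x →
      ∑ y, (star (eveKet l P y x) ⬝ᵥ (M y *ᵥ eveKet l P y x)).re ≤
        (Real.sqrt (P (x, 0) / margP l P x) +
          Real.sqrt ((margP l P x - P (x, 0)) / margP l P x) * Real.sqrt (N - 1)) ^ 2 := by
    intro x hx
    set a : ℝ := Real.sqrt (P (x, 0) / margP l P x) with ha
    set b : ℝ := Real.sqrt ((margP l P x - P (x, 0)) / margP l P x) with hb
    have ha0 : 0 ≤ a := Real.sqrt_nonneg _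
    have hb0 : 0 ≤ b := Real.sqrt_nonneg _
    set u : (Fin l → ZMod 2) × (Fin l → ZMod 2) → ℂ := bv (x, 0) with hu
    set r : (Fin l → ZMod 2) → ((Fin l → ZMod 2) × (Fin l → ZMod 2)) → ℂ :=
      fun y => eveKet l P y x - (a : ℂ) • u with hr
    have hket0 : ∀ y, eveKet l P y x (x, 0) = (a : ℂ) := by
      intro y
      simp [eveKet, ha]
    have hdec : ∀ y, eveKet l P y x = (a : ℂ) • u + r y := by
      intro y; rw [hr, add_comm]; exact (sub_add_cancel _ _).symm
    -- `r` as a combination of basis vectors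
    have hrsum : ∀ y, r y =
        ∑ z ∈ Finset.univ.erase (0 : Fin l → ZMod 2),
          eveKet l P y x (x, z) • bv ((x, z) : (Fin l → ZMod 2) × (Fin l → ZMod 2)) := by
      intro y
      funext w
      simp only [Finset.sum_apply, Pi.smul_apply, bv, smul_eq_mul, mul_ite, mul_one, mul_zero]
      by_cases hw1 : w.1 = x
      · by_cases hw2 : w.2 = (0 : Fin l → ZMod 2)
        · have hw : w = ((x, 0) : _ × _) := Prod.ext hw1 hw2
          rw [Finset.sum_eq_zero]
          · simp [hr, hw, hket0 y, hu, bv]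
          · intro z hz
            rw [if_neg]
            intro hz2
            exact (Finset.mem_erase.mp hz).1
              (by simpa [hw, Prod.ext_iff, eq_comm] using hz2)
        · have hvw : eveKet l P y x w = eveKet l P y x (x, w.2) := by
            rw [show w = ((x, w.2) : _ × _) from Prod.ext hw1 rfl]
          rw [Finset.sum_eq_single w.2]
          · have hwx : w = ((x, w.2) : _ × _) := Prod.ext hw1 rfl
            rw [if_pos hwx, hr]
            have hu0 : u w = 0 := by
              simp only [hu, bv, ite_eq_right_iff]
              intro hww; exact (hw2 (congrArg Prod.snd hww)).elim
            simp [hu0, hvw]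
          · intro z _ hz
            rw [if_neg]
            intro hz2
            exact hz (congrArg Prod.snd hz2).symm
          · intro h
            exact absurd (Finset.mem_erase.mpr ⟨hw2, Finset.mem_univ _⟩) h
      · rw [Finset.sum_eq_zero]
        · have h1 : eveKet l P y x w = 0 := by simp [eveKet, hw1]
          have h2 : u w = 0 := by
            simp only [hu, bv, ite_eq_right_iff]
            intro hww; exact (hw1 (congrArg Prod.fst hww)).elim
          simp [hr, h1, h2]
        · intro z _
          rw [if_neg]
          intro hz2
          exact hw1 (congrArg Prod.fst hz2)
    -- norms of the coefficients
    have hketnorm : ∀ (y z : Fin l → ZMod 2),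
        ‖eveKet l P y x (x, z)‖ = Real.sqrt (P (x, z) / margP l P x) := by
      intro y z
      simp only [eveKet, eq_self_iff_true, if_true]
      rw [norm_mul, norm_pow, norm_neg, norm_one, one_pow, one_mul,
        Complex.norm_real, Real.norm_eq_abs, abs_of_nonneg (Real.sqrt_nonneg _)]
    set α : (Fin l → ZMod 2) → ℝ := fun y => en ((hMpos y).sqrt *ᵥ u) with hα
    set β : (Fin l → ZMod 2) → ℝ := fun y => en ((hMpos y).sqrt *ᵥ r y) with hβ
    set t : (Fin l → ZMod 2) → ℝ := fun y =>
      ∑ z ∈ Finset.univ.erase (0 : Fin l → ZMod 2),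
        en ((hMpos y).sqrt *ᵥ bv ((x, z) : _ × _)) ^ 2 with ht
    have hα0 : ∀ y, 0 ≤ α y := fun y => en_nonneg _
    have hβ0 : ∀ y, 0 ≤ β y := fun y => en_nonneg _
    have ht0 : ∀ y, 0 ≤ t y := fun y => Finset.sum_nonneg fun _ _ => sq_nonneg _
    have hquad : ∀ y, (star (eveKet l P y x) ⬝ᵥ (M y *ᵥ eveKet l P y x)).re ≤
        (a * α y + β y) ^ 2 := by
      intro y
      rw [quad_eq_en_sq (hMpos y)]
      have h1 : (hMpos y).sqrt *ᵥ eveKet l P y x =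
          (a : ℂ) • ((hMpos y).sqrt *ᵥ u) + (hMpos y).sqrt *ᵥ r y := by
        rw [hdec y, mulVec_add, mulVec_smul]
      rw [h1]
      refine pow_le_pow_left₀ (en_nonneg _) ?_ 2
      refine (en_add _ _).trans ?_
      rw [en_smul, Complex.norm_real, Real.norm_eq_abs, abs_of_nonneg ha0]
    have hαsum : ∑ y, α y ^ 2 = 1 := hbvsum ((x, 0) : _ × _)
    have htsum : ∑ y, t y = N - 1 := by
      rw [ht]
      rw [Finset.sum_comm]
      rw [Finset.sum_congr rfl fun z _ => hbvsum ((x, z) : _ × _)]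
      rw [Finset.sum_const, Finset.card_erase_of_mem (Finset.mem_univ _), Finset.card_univ]
      have h1 : 1 ≤ Fintype.card (Fin l → ZMod 2) := Fintype.card_pos
      rw [nsmul_eq_mul, Nat.cast_sub h1, hcard, Nat.cast_one, mul_one]
    have hβle : ∀ y, β y ≤ b * Real.sqrt (t y) := by
      intro y
      have h1 : (hMpos y).sqrt *ᵥ r y =
          ∑ z ∈ Finset.univ.erase (0 : Fin l → ZMod 2),
            eveKet l P y x (x, z) • ((hMpos y).sqrt *ᵥ bv ((x, z) : _ × _)) := by
        rw [hrsum y, mulVec_sum']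
        exact Finset.sum_congr rfl fun z _ => by rw [mulVec_smul]
      calc β y = en ((hMpos y).sqrt *ᵥ r y) := rfl
        _ ≤ ∑ z ∈ Finset.univ.erase (0 : Fin l → ZMod 2),
            en (eveKet l P y x (x, z) • ((hMpos y).sqrt *ᵥ bv ((x, z) : _ × _))) := by
              rw [h1]; exact en_sum_le _ _
        _ = ∑ z ∈ Finset.univ.erase (0 : Fin l → ZMod 2),
            Real.sqrt (P (x, z) / margP l P x) *
              en ((hMpos y).sqrt *ᵥ bv ((x, z) : _ × _)) := by
              refine Finset.sum_congr rfl fun z _ => ?_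
              rw [en_smul, hketnorm]
        _ ≤ Real.sqrt (∑ z ∈ Finset.univ.erase (0 : Fin l → ZMod 2),
              Real.sqrt (P (x, z) / margP l P x) ^ 2) *
            Real.sqrt (∑ z ∈ Finset.univ.erase (0 : Fin l → ZMod 2),
              en ((hMpos y).sqrt *ᵥ bv ((x, z) : _ × _)) ^ 2) :=
              Real.sum_mul_le_sqrt_mul_sqrt _ _ _
        _ = b * Real.sqrt (t y) := by
              congr 1
              rw [hb]
              congr 1
              rw [Finset.sum_congr rfl fun z _ =>
                Real.sq_sqrt (div_nonneg (hP0 _) (hmarg0 x)), ← Finset.sum_div]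
              congr 1
              have := Finset.add_sum_erase Finset.univ (fun z => P (x, z))
                (Finset.mem_univ (0 : Fin l → ZMod 2))
              have hm : margP l P x = ∑ z, P (x, z) := rfl
              linarith
    have hcs : ∑ y, α y * Real.sqrt (t y) ≤ Real.sqrt (N - 1) := by
      calc ∑ y, α y * Real.sqrt (t y)
          ≤ Real.sqrt (∑ y, α y ^ 2) * Real.sqrt (∑ y, Real.sqrt (t y) ^ 2) :=
            Real.sum_mul_le_sqrt_mul_sqrt _ _ _
        _ = Real.sqrt (N - 1) := by
            rw [hαsum, Finset.sum_congr rfl fun y _ => Real.sq_sqrt (ht0 y), htsum,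
              Real.sqrt_one, one_mul]
    calc ∑ y, (star (eveKet l P y x) ⬝ᵥ (M y *ᵥ eveKet l P y x)).re
        ≤ ∑ y, (a * α y + β y) ^ 2 := Finset.sum_le_sum fun y _ => hquad y
      _ ≤ ∑ y, (a * α y + b * Real.sqrt (t y)) ^ 2 := by
          refine Finset.sum_le_sum fun y _ => ?_
          have h1 := hβle y
          have h2 : 0 ≤ a * α y + β y := add_nonneg (mul_nonneg ha0 (hα0 y)) (hβ0 y)
          refine pow_le_pow_left₀ h2 (by linarith) 2
      _ = a ^ 2 * (∑ y, α y ^ 2) + 2 * a * b * (∑ y, α y * Real.sqrt (t y))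
            + b ^ 2 * (∑ y, t y) := by
          rw [Finset.mul_sum, Finset.mul_sum, Finset.mul_sum, ← Finset.sum_add_distrib,
            ← Finset.sum_add_distrib]
          refine Finset.sum_congr rfl fun y _ => ?_
          have h3 : Real.sqrt (t y) ^ 2 = t y := Real.sq_sqrt (ht0 y)
          linear_combination b ^ 2 * h3
      _ ≤ a ^ 2 * 1 + 2 * a * b * Real.sqrt (N - 1) + b ^ 2 * (N - 1) := by
          rw [hαsum, htsum]
          have h4 : 0 ≤ 2 * a * b := by positivity
          have h6 := mul_le_mul_of_nonneg_left hcs h4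
          linarith
      _ = (a + b * Real.sqrt (N - 1)) ^ 2 := by
          have h5 : Real.sqrt (N - 1) ^ 2 = N - 1 := Real.sq_sqrt (by linarith)
          linear_combination (-(b ^ 2)) * h5
  -- trace formula
  have hG1 : ∀ y, ((eveState l P y * M y).trace).re
      = ∑ x, margP l P x * (star (eveKet l P y x) ⬝ᵥ (M y *ᵥ eveKet l P y x)).re := by
    intro y
    rw [eveState, Finset.sum_mul, Matrix.trace_sum, Complex.re_sum]
    refine Finset.sum_congr rfl fun x _ => ?_
    rw [smul_mul_assoc, Matrix.trace_smul, trace_vecMulVec_mul, smul_eq_mul,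
      Complex.re_ofReal_mul]
  -- global per-x bound
  set G : (Fin l → ZMod 2) → ℝ := fun x =>
    (Real.sqrt ε * Real.sqrt (P (x, 0) / margP l P x) +
      Real.sqrt (1 - ε) * Real.sqrt ((margP l P x - P (x, 0)) / margP l P x)) ^ 2 with hG
  have main1 : ((2 : ℝ) ^ l)⁻¹ * ∑ y, ((eveState l P y * M y).trace).re ≤
      ∑ x, margP l P x * G x := by
    rw [show ((2:ℝ)^l)⁻¹ = ε from rfl]
    rw [Finset.sum_congr rfl fun y _ => hG1 y, Finset.sum_comm]
    rw [Finset.mul_sum]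
    refine Finset.sum_le_sum fun x _ => ?_
    rw [← Finset.mul_sum]
    rcases eq_or_lt_of_le (hmarg0 x) with h0 | h0
    · rw [← h0]
      simp
    · have h1 := key x h0
      have h2 : ε * (margP l P x * ∑ y, (star (eveKet l P y x) ⬝ᵥ (M y *ᵥ eveKet l P y x)).re)
          = margP l P x * (ε * ∑ y, (star (eveKet l P y x) ⬝ᵥ (M y *ᵥ eveKet l P y x)).re) := by
        ring
      rw [h2]
      refine mul_le_mul_of_nonneg_left ?_ (hmarg0 x)
      have h3 : ε * ∑ y, (star (eveKet l P y x) ⬝ᵥ (M y *ᵥ eveKet l P y x)).re ≤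
          ε * (Real.sqrt (P (x, 0) / margP l P x) +
            Real.sqrt ((margP l P x - P (x, 0)) / margP l P x) * Real.sqrt (N - 1)) ^ 2 :=
        mul_le_mul_of_nonneg_left h1 hε0
      refine h3.trans_eq ?_
      rw [hG]
      have hsε : Real.sqrt ε ^ 2 = ε := Real.sq_sqrt hε0
      have hεN : Real.sqrt (1 - ε) = Real.sqrt ε * Real.sqrt (N - 1) := by
        rw [← Real.sqrt_mul hε0]
        congr 1
        rw [hε, mul_sub, inv_mul_cancel₀ hNpos.ne', mul_one]
      rw [hεN]
      nlinarith [hsε]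
  refine main1.trans ?_
  -- now sum over x
  set s : Finset (Fin l → ZMod 2) := Finset.univ.filter (fun x => 0 < margP l P x) with hs
  have hmargzero : ∀ x ∉ s, margP l P x = 0 := by
    intro x hxs
    rcases eq_or_lt_of_le (hmarg0 x) with h0 | h0
    · exact h0.symm
    · exact absurd (Finset.mem_filter.mpr ⟨Finset.mem_univ x, h0⟩) hxs
  have hPzero : ∀ x ∉ s, P (x, 0) = 0 := fun x hxs =>
    le_antisymm (by rw [← hmargzero x hxs]; exact hP0le x) (hP0 _)
  have hstep1 : ∑ x, margP l P x * G x = ∑ x ∈ s, margP l P x * G x := by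
    symm
    refine Finset.sum_subset (Finset.subset_univ s) fun x _ hxs => ?_
    rw [hmargzero x hxs, zero_mul]
  have hstep2 : ∀ x ∈ s, margP l P x * G x =
      ε * P (x, 0) + (1 - ε) * (margP l P x - P (x, 0)) +
        2 * Real.sqrt ε * Real.sqrt (1 - ε) *
          (Real.sqrt (P (x, 0)) * Real.sqrt (margP l P x - P (x, 0))) := by
    intro x hxs
    have hx : 0 < margP l P x := (Finset.mem_filter.mp hxs).2
    have hsub0 : 0 ≤ margP l P x - P (x, 0) := by linarith [hP0le x]
    have h1 : Real.sqrt (P (x, 0) / margP l P x) ^ 2 = P (x, 0) / margP l P x :=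
      Real.sq_sqrt (div_nonneg (hP0 _) (hmarg0 x))
    have h2 : Real.sqrt ((margP l P x - P (x, 0)) / margP l P x) ^ 2 =
        (margP l P x - P (x, 0)) / margP l P x := Real.sq_sqrt (div_nonneg hsub0 (hmarg0 x))
    have h3 : Real.sqrt (P (x, 0) / margP l P x) *
        Real.sqrt ((margP l P x - P (x, 0)) / margP l P x) =
        Real.sqrt (P (x, 0)) * Real.sqrt (margP l P x - P (x, 0)) / margP l P x := by
      rw [Real.sqrt_div (hP0 _), Real.sqrt_div hsub0]
      rw [div_mul_div_comm, Real.mul_self_sqrt (hmarg0 x)]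
    have hsε : Real.sqrt ε ^ 2 = ε := Real.sq_sqrt hε0
    have hsε' : Real.sqrt (1 - ε) ^ 2 = 1 - ε := Real.sq_sqrt (by linarith)
    have hsm : Real.sqrt (margP l P x) ^ 2 = margP l P x := Real.sq_sqrt (hmarg0 x)
    have hsp : Real.sqrt (P (x, 0)) ^ 2 = P (x, 0) := Real.sq_sqrt (hP0 _)
    have hsq2 : Real.sqrt (margP l P x - P (x, 0)) ^ 2 = margP l P x - P (x, 0) :=
      Real.sq_sqrt hsub0
    rw [hG]
    simp only
    rw [Real.sqrt_div (hP0 (x, 0)), Real.sqrt_div hsub0]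
    have expand : (Real.sqrt ε * (Real.sqrt (P (x, 0)) / Real.sqrt (margP l P x)) +
        Real.sqrt (1 - ε) * (Real.sqrt (margP l P x - P (x, 0)) / Real.sqrt (margP l P x))) ^ 2 =
        (Real.sqrt ε * Real.sqrt (P (x, 0)) +
          Real.sqrt (1 - ε) * Real.sqrt (margP l P x - P (x, 0))) ^ 2 /
          Real.sqrt (margP l P x) ^ 2 := by
      ring
    rw [expand, hsm, mul_div_cancel₀ _ hx.ne']
    linear_combination (Real.sqrt (P (x, 0)) ^ 2) * hsε + ε * hsp +
      (Real.sqrt (margP l P x - P (x, 0)) ^ 2) * hsε' + (1 - ε) * hsq2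
  rw [hstep1, Finset.sum_congr rfl hstep2]
  have hsum1 : ∑ x ∈ s, P (x, 0) = q := by
    refine Finset.sum_subset (Finset.subset_univ s) fun x _ hxs => hPzero x hxs
  have hsum2 : ∑ x ∈ s, (margP l P x - P (x, 0)) = 1 - q := by
    rw [Finset.sum_sub_distrib, hsum1]
    have : ∑ x ∈ s, margP l P x = 1 := by
      rw [← hmargsum]
      exact Finset.sum_subset (Finset.subset_univ s) fun x _ hxs => hmargzero x hxs
    rw [this]
  have hcross : ∑ x ∈ s, Real.sqrt (P (x, 0)) * Real.sqrt (margP l P x - P (x, 0)) ≤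
      Real.sqrt q * Real.sqrt (1 - q) := by
    calc ∑ x ∈ s, Real.sqrt (P (x, 0)) * Real.sqrt (margP l P x - P (x, 0))
        ≤ Real.sqrt (∑ x ∈ s, P (x, 0)) * Real.sqrt (∑ x ∈ s, (margP l P x - P (x, 0))) :=
          Real.sum_sqrt_mul_sqrt_le _ (fun x => hP0 _) (fun x => by linarith [hP0le x])
      _ = Real.sqrt q * Real.sqrt (1 - q) := by rw [hsum1, hsum2]
  rw [Finset.sum_add_distrib, Finset.sum_add_distrib, ← Finset.mul_sum, ← Finset.mul_sum,
    ← Finset.mul_sum, hsum1, hsum2]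
  have h1 : Real.sqrt q ^ 2 = q := Real.sq_sqrt hq0
  have h2 : Real.sqrt (1 - q) ^ 2 = 1 - q := Real.sq_sqrt (by linarith)
  have h3 : Real.sqrt ε ^ 2 = ε := Real.sq_sqrt hε0
  have h4 : Real.sqrt (1 - ε) ^ 2 = 1 - ε := Real.sq_sqrt (by linarith)
  have h5 : 0 ≤ 2 * Real.sqrt ε * Real.sqrt (1 - ε) := by positivity
  nlinarith [mul_le_mul_of_nonneg_left hcross h5]
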